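/- arXiv:2307.06274 — 2 statements merged into one kernel-verified Lean document; each statement's English description precedes it below -/
import Mathlib

section
/- For s ∈ (0,1/2) and X → ∞, W_s(X) = (√π/(Γ(1/2-s)Γ(s))) ∫_{X²-1}^∞ u^{s-1}/√(u+1) du satisfies W_s(X) = 𝔟_s X^{2s-1} + O(X^{2s-3}), where 𝔟_s = Γ(1/2)/(Γ(3/2-s)Γ(s)). -/
open Real MeasureTheory

/-- `W_s(X)`, the hitting probability of `(-1,1)` for a `2s`-stable Lévy flight from `X`. -/
noncomputable def Wfun (s X : ℝ) : ℝ :=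
  (Real.sqrt π / (Real.Gamma (1/2 - s) * Real.Gamma s)) *
    ∫ u in Set.Ioi (X ^ 2 - 1), u ^ (s - 1) / Real.sqrt (u + 1)

lemma ptwise {s u : ℝ} (hu : 0 < u) :
    u ^ (s-1) / Real.sqrt (u+1) ≤ u ^ (s - 3/2) ∧
    u ^ (s - 3/2) - u ^ (s-1) / Real.sqrt (u+1) ≤ u ^ (s - 5/2) / 2 := by
  have hA : 0 < Real.sqrt u := Real.sqrt_pos.mpr hu
  have hB : 0 < Real.sqrt (u+1) := Real.sqrt_pos.mpr (by linarith)
  have hAB : Real.sqrt u ≤ Real.sqrt (u+1) := Real.sqrt_le_sqrt (by linarith)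
  have hA2 : Real.sqrt u ^ 2 = u := Real.sq_sqrt hu.le
  have hB2 : Real.sqrt (u+1) ^ 2 = u + 1 := Real.sq_sqrt (by linarith)
  have h1 : u ^ (s - 3/2) = u ^ (s-1) / Real.sqrt u := by
    rw [Real.sqrt_eq_rpow, ← Real.rpow_sub hu]; congr 1; ring
  have h2 : u ^ (s - 5/2) = u ^ (s-1) / (u * Real.sqrt u) := by
    have hm : u * Real.sqrt u = u ^ ((3:ℝ)/2) := by
      rw [Real.sqrt_eq_rpow, ← Real.rpow_one_add' hu.le (by norm_num)]
      norm_num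
    rw [hm, ← Real.rpow_sub hu]; congr 1; ring
  have hr : (0:ℝ) ≤ u ^ (s-1) := Real.rpow_nonneg hu.le _
  constructor
  · rw [h1]
    exact div_le_div_of_nonneg_left hr hA hAB
  · rw [h1, h2]
    have key : 1 / Real.sqrt u - 1 / Real.sqrt (u+1) ≤ 1 / (u * Real.sqrt u) / 2 := by
      rw [div_sub_div _ _ (ne_of_gt hA) (ne_of_gt hB), div_div,
        div_le_div_iff₀ (by positivity) (by positivity)]
      nlinarith [mul_pos hA hB, mul_pos (mul_pos hA hA) hA, sq_nonneg (Real.sqrt (u+1) - Real.sqrt u)]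
    calc u ^ (s-1) / Real.sqrt u - u ^ (s-1) / Real.sqrt (u+1)
        = u ^ (s-1) * (1 / Real.sqrt u - 1 / Real.sqrt (u+1)) := by ring
      _ ≤ u ^ (s-1) * (1 / (u * Real.sqrt u) / 2) := by
          exact mul_le_mul_of_nonneg_left key hr
      _ = u ^ (s-1) / (u * Real.sqrt u) / 2 := by ring

lemma intest {s : ℝ} (hs0 : 0 < s) (hs1 : s < 1/2) {Y : ℝ} (hY : 1 ≤ Y) :
    |(∫ u in Set.Ioi Y, u ^ (s-1) / Real.sqrt (u+1)) - Y ^ (s - 1/2) / (1/2 - s)| ≤ Y ^ (s - 3/2) := by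
  have hY0 : (0:ℝ) < Y := by linarith
  have hint_g : IntegrableOn (fun u : ℝ => u ^ (s - 3/2)) (Set.Ioi Y) :=
    integrableOn_Ioi_rpow_of_lt (by linarith) hY0
  have hint_h : IntegrableOn (fun u : ℝ => u ^ (s - 5/2) / 2) (Set.Ioi Y) :=
    (integrableOn_Ioi_rpow_of_lt (by linarith) hY0).div_const 2
  have hmeas : AEStronglyMeasurable (fun u : ℝ => u ^ (s-1) / Real.sqrt (u+1))
      (volume.restrict (Set.Ioi Y)) := by
    refine Measurable.aestronglyMeasurable ?_
    fun_prop
  have hint_f : IntegrableOn (fun u : ℝ => u ^ (s-1) / Real.sqrt (u+1)) (Set.Ioi Y) := by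
    refine hint_g.mono' hmeas ?_
    filter_upwards [ae_restrict_mem measurableSet_Ioi] with u hu
    have hu0 : (0:ℝ) < u := lt_of_le_of_lt hY0.le hu
    rw [Real.norm_eq_abs, abs_of_nonneg (by positivity)]
    exact (ptwise hu0).1
  have hJ : ∫ u in Set.Ioi Y, u ^ (s - 3/2) = Y ^ (s - 1/2) / (1/2 - s) := by
    rw [integral_Ioi_rpow_of_lt (by linarith) hY0]
    have : s - 3/2 + 1 = s - 1/2 := by ring
    rw [this, neg_div, show (1:ℝ)/2 - s = -(s - 1/2) by ring, div_neg]
  have hH : ∫ u in Set.Ioi Y, u ^ (s - 5/2) / 2 ≤ Y ^ (s - 3/2) := by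
    rw [integral_div, integral_Ioi_rpow_of_lt (by linarith) hY0]
    have : s - 5/2 + 1 = s - 3/2 := by ring
    rw [this, neg_div, show -(Y ^ (s - 3/2) / (s - 3/2)) = Y ^ (s - 3/2)/(3/2 - s) by
      rw [show (3:ℝ)/2 - s = -(s - 3/2) by ring, div_neg]]
    rw [div_div]
    exact div_le_self (Real.rpow_nonneg hY0.le _) (by linarith)
  have hle : (∫ u in Set.Ioi Y, u ^ (s-1) / Real.sqrt (u+1)) ≤ ∫ u in Set.Ioi Y, u ^ (s - 3/2) := by
    refine setIntegral_mono_on hint_f hint_g measurableSet_Ioi ?_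
    intro u hu
    exact (ptwise (lt_of_le_of_lt hY0.le hu)).1
  have hdiff : (∫ u in Set.Ioi Y, u ^ (s - 3/2)) - (∫ u in Set.Ioi Y, u ^ (s-1) / Real.sqrt (u+1))
      ≤ Y ^ (s - 3/2) := by
    rw [← integral_sub hint_g hint_f]
    refine le_trans (setIntegral_mono_on (hint_g.sub hint_f) hint_h measurableSet_Ioi ?_) hH
    intro u hu
    exact (ptwise (lt_of_le_of_lt hY0.le hu)).2
  rw [← hJ, abs_sub_comm, abs_of_nonneg (by linarith)]
  linarith

lemma comp_lem {p a : ℝ} (hp1 : -(1/2) ≤ p) (hp0 : p < 0) (ha : 1 ≤ a) :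
    (a+1) ^ p ≤ a ^ p ∧ a ^ p - (a+1) ^ p ≤ (a+1) ^ (p-1) := by
  have ha0 : (0:ℝ) < a := by linarith
  have ha1 : (0:ℝ) < a + 1 := by linarith
  refine ⟨Real.rpow_le_rpow_of_nonpos ha0 (by linarith) hp0.le, ?_⟩
  set q : ℝ := -p with hq
  have hq0 : 0 < q := by simp [hq]; linarith
  have hqh : q ≤ 1/2 := by simp [hq]; linarith
  have step1 : (a+1) ^ q ≤ a ^ q * Real.sqrt (1 + 1/a) := by
    have e1 : a + 1 = a * (1 + 1/a) := by field_simp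
    rw [e1, Real.mul_rpow ha0.le (by positivity)]
    refine mul_le_mul_of_nonneg_left ?_ (Real.rpow_nonneg ha0.le _)
    rw [Real.sqrt_eq_rpow]
    exact Real.rpow_le_rpow_of_exponent_le (by nlinarith [one_div_pos.mpr ha0]) hqh
  have step2 : Real.sqrt (1 + 1/a) ≤ 1 + 1/(2*a) := by
    have e2 : 2*(1/(2*a)) = 1/a := by field_simp
    have h : 1 + 1/a ≤ (1 + 1/(2*a))^2 := by nlinarith [sq_nonneg (1/(2*a))]
    calc Real.sqrt (1 + 1/a) ≤ Real.sqrt ((1 + 1/(2*a))^2) := Real.sqrt_le_sqrt h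
      _ = 1 + 1/(2*a) := Real.sqrt_sq (by positivity)
  set A : ℝ := a ^ q with hA'
  set B : ℝ := (a+1) ^ q with hB'
  have hA : 0 < A := Real.rpow_pos_of_pos ha0 _
  have hB : 0 < B := Real.rpow_pos_of_pos ha1 _
  have hApB : A ≤ B := Real.rpow_le_rpow ha0.le (by linarith) hq0.le
  have step3 : B - A ≤ A / (2*a) := by
    have : B ≤ A * (1 + 1/(2*a)) :=
      le_trans (le_trans step1 (mul_le_mul_of_nonneg_left step2 (Real.rpow_nonneg ha0.le _))) le_rfl
    have e : A * (1 + 1/(2*a)) = A + A/(2*a) := by ring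
    linarith [this, e.le]
  have hap : a ^ p = 1 / A := by
    rw [hA', hq, Real.rpow_neg ha0.le, one_div, inv_inv]
  have hap1 : (a+1) ^ p = 1 / B := by
    rw [hB', hq, Real.rpow_neg ha1.le, one_div, inv_inv]
  have hrhs : (a+1) ^ (p-1) = 1 / (B * (a+1)) := by
    rw [show p - 1 = -q - 1 by rw [hq]; ring, Real.rpow_sub ha1, Real.rpow_one, Real.rpow_neg ha1.le,
      hB']
    field_simp
  rw [hap, hap1, hrhs]
  have hBA : (B - A) * (2*a) ≤ A := by
    rw [← le_div_iff₀ (by positivity)]; exact step3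
  rw [div_sub_div _ _ hA.ne' hB.ne', div_le_div_iff₀ (by positivity) (by positivity)]
  nlinarith [mul_le_mul_of_nonneg_right hBA hB.le, mul_nonneg (sub_nonneg.mpr hApB) hB.le,
    mul_pos hA hB, mul_pos hB ha1]

set_option maxHeartbeats 1000000 in
theorem stmt_8 (s : ℝ) (hs : s ∈ Set.Ioo (0:ℝ) (1/2)) :
    ∃ C M : ℝ, 0 < C ∧ 0 < M ∧ ∀ X : ℝ, M ≤ X →
      |Wfun s X - (Real.Gamma (1/2) / (Real.Gamma (3/2 - s) * Real.Gamma s))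
          * X ^ (2*s - 1)|
        ≤ C * X ^ (2*s - 3) := by
  obtain ⟨hs0, hs1⟩ := hs
  have hG1 : 0 < Real.Gamma s := Real.Gamma_pos_of_pos hs0
  have hG2 : 0 < Real.Gamma (1/2 - s) := Real.Gamma_pos_of_pos (by linarith)
  have hpi : (0:ℝ) < Real.sqrt π := Real.sqrt_pos.mpr Real.pi_pos
  set κ : ℝ := Real.sqrt π / (Real.Gamma (1/2 - s) * Real.Gamma s) with hκ
  have hκ0 : 0 < κ := by positivity
  have hhalf : (0:ℝ) < 1/2 - s := by linarith
  have hb : Real.Gamma (1/2) / (Real.Gamma (3/2 - s) * Real.Gamma s) = κ / (1/2 - s) := by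
    have h32 : (3:ℝ)/2 - s = (1/2 - s) + 1 := by ring
    rw [h32, Real.Gamma_add_one hhalf.ne', Real.Gamma_one_half_eq, hκ]
    rw [Real.sqrt_eq_rpow]
    field_simp
  refine ⟨3*κ + κ/(1/2-s), 2, by positivity, by norm_num, ?_⟩
  intro X hX
  have hX0 : (0:ℝ) < X := by linarith
  have hY1 : (1:ℝ) ≤ X ^ 2 - 1 := by nlinarith
  have hY0 : (0:ℝ) < X ^ 2 - 1 := by linarith
  set Y : ℝ := X ^ 2 - 1 with hYdef
  have hYX : Y + 1 = X ^ 2 := by rw [hYdef]; ring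
  -- rpow facts
  have h2X : X ^ ((2:ℝ)) = X ^ (2:ℕ) := by
    rw [← Real.rpow_natCast X 2]; norm_num
  have hpow : ∀ e : ℝ, X ^ (2*e) = (X ^ 2) ^ e := by
    intro e
    rw [Real.rpow_mul hX0.le, h2X]
  -- estimate 1
  have E1 : |(∫ u in Set.Ioi Y, u ^ (s-1) / Real.sqrt (u+1)) - Y ^ (s - 1/2) / (1/2 - s)|
      ≤ Y ^ (s - 3/2) := intest hs0 hs1 hY1
  -- comparison
  obtain ⟨C1, C2⟩ := comp_lem (p := s - 1/2) (a := Y) (by linarith) (by linarith) hY1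
  rw [hYX] at C1 C2
  have E2a : X ^ (2*s - 1) ≤ Y ^ (s - 1/2) := by
    rw [show 2*s - 1 = 2*(s - 1/2) by ring, hpow]; exact C1
  have E2b : Y ^ (s - 1/2) - X ^ (2*s - 1) ≤ X ^ (2*s - 3) := by
    rw [show 2*s - 1 = 2*(s - 1/2) by ring, hpow, show 2*s - 3 = 2*(s - 3/2) by ring, hpow]
    have : s - 1/2 - 1 = s - 3/2 := by ring
    rw [← this]; exact C2
  -- estimate 3 : Y ^ (s-3/2) ≤ 3 * X^(2s-3)
  have E3 : Y ^ (s - 3/2) ≤ 3 * X ^ (2*s - 3) := by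
    have hYhalf : X ^ 2 / 2 ≤ Y := by rw [hYdef]; nlinarith
    have step1 : Y ^ (s - 3/2) ≤ (X ^ 2 / 2) ^ (s - 3/2) :=
      Real.rpow_le_rpow_of_nonpos (by positivity) hYhalf (by linarith)
    have e1 : X ^ 2 / 2 = (X ^ 2) * (1/2 : ℝ) := by ring
    have step2 : (X ^ 2 / 2) ^ (s - 3/2)
        = (X ^ 2) ^ (s - 3/2) * ((1:ℝ)/2) ^ (s - 3/2) := by
      rw [e1, Real.mul_rpow (by positivity) (by norm_num)]
    have hhalfpow : ((1:ℝ)/2) ^ (s - 3/2) = (2:ℝ) ^ (-(s - 3/2)) := by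
      rw [show ((1:ℝ)/2) = (2:ℝ)⁻¹ by norm_num, ← Real.rpow_neg_one,
        ← Real.rpow_mul (by norm_num : (0:ℝ) ≤ 2)]
      ring_nf
    have h23 : (2:ℝ) ^ (-(s - 3/2)) ≤ 3 := by
      have hle : (2:ℝ) ^ (-(s - 3/2)) ≤ (2:ℝ) ^ ((3:ℝ)/2) :=
        Real.rpow_le_rpow_of_exponent_le one_le_two (by linarith)
      have ht : ((2:ℝ) ^ ((3:ℝ)/2)) ^ (2:ℕ) = 8 := by
        rw [← Real.rpow_natCast ((2:ℝ) ^ ((3:ℝ)/2)) 2,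
          ← Real.rpow_mul (by norm_num : (0:ℝ) ≤ 2)]
        rw [show (3:ℝ)/2 * ((2:ℕ):ℝ) = ((3:ℕ):ℝ) by norm_num, Real.rpow_natCast]
        norm_num
      nlinarith [Real.rpow_nonneg (by norm_num : (0:ℝ) ≤ 2) ((3:ℝ)/2)]
    calc Y ^ (s - 3/2) ≤ (X ^ 2) ^ (s - 3/2) * ((1:ℝ)/2) ^ (s - 3/2) := by
          rw [← step2]; exact step1
      _ ≤ (X ^ 2) ^ (s - 3/2) * 3 := by
          rw [hhalfpow]
          exact mul_le_mul_of_nonneg_left h23 (Real.rpow_nonneg (by positivity) _)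
      _ = 3 * X ^ (2*s - 3) := by
          rw [show 2*s - 3 = 2*(s - 3/2) by ring, hpow]; ring
  -- assembly
  have hW : Wfun s X = κ * ∫ u in Set.Ioi Y, u ^ (s-1) / Real.sqrt (u+1) := by
    rw [Wfun]
  set I : ℝ := ∫ u in Set.Ioi Y, u ^ (s-1) / Real.sqrt (u+1) with hI
  have split : Wfun s X - (Real.Gamma (1/2) / (Real.Gamma (3/2 - s) * Real.Gamma s))
      * X ^ (2*s - 1)
      = κ * (I - Y ^ (s - 1/2) / (1/2 - s))
        + (κ / (1/2 - s)) * (Y ^ (s - 1/2) - X ^ (2*s - 1)) := by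
    rw [hW, hb]; field_simp; ring
  rw [split]
  calc |κ * (I - Y ^ (s - 1/2) / (1/2 - s))
        + (κ / (1/2 - s)) * (Y ^ (s - 1/2) - X ^ (2*s - 1))|
      ≤ |κ * (I - Y ^ (s - 1/2) / (1/2 - s))|
        + |(κ / (1/2 - s)) * (Y ^ (s - 1/2) - X ^ (2*s - 1))| := abs_add_le _ _
    _ = κ * |I - Y ^ (s - 1/2) / (1/2 - s)|
        + (κ / (1/2 - s)) * |Y ^ (s - 1/2) - X ^ (2*s - 1)| := by
        rw [abs_mul, abs_mul, abs_of_pos hκ0, abs_of_pos (show (0:ℝ) < κ / (1/2 - s) from by positivity)]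
    _ ≤ κ * Y ^ (s - 3/2) + (κ / (1/2 - s)) * X ^ (2*s - 3) := by
        gcongr
        rw [abs_of_nonneg (by linarith)]; exact E2b
    _ ≤ κ * (3 * X ^ (2*s - 3)) + (κ / (1/2 - s)) * X ^ (2*s - 3) := by
        gcongr
    _ = (3*κ + κ/(1/2-s)) * X ^ (2*s - 3) := by ring
end

section
/- For s ∈ (0,1/2), the fractional Poisson kernel P_s(y,x) = (sin(πs)/π) ((1-x²)/(y²-1))^s / |x-y| satisfies ∫_{|y|>1} P_s(y,x) dy = 1 for every x ∈ (-1,1). -/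
open Real MeasureTheory Set

lemma beta_cplx_eq (s : ℝ) (h0 : 0 < s) (h1 : s < 1) :
    Complex.betaIntegral s (1 - s) = ((π / Real.sin (π * s) : ℝ) : ℂ) := by
  have hs : 0 < (s:ℂ).re := by simpa using h0
  have ht : 0 < (1 - (s:ℂ)).re := by simp [Complex.sub_re]; linarith
  have h := Complex.Gamma_mul_Gamma_eq_betaIntegral hs ht
  rw [add_sub_cancel, Complex.Gamma_one, one_mul] at h
  rw [← h, Complex.Gamma_mul_Gamma_one_sub]
  push_cast [Complex.ofReal_sin]
  ring_nf

lemma beta_ae (s : ℝ) (h0 : 0 < s) (h1 : s < 1) :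
    ∀ x ∈ Ioo (0:ℝ) 1,
      ((x:ℂ) ^ ((s:ℂ) - 1) * (1 - (x:ℂ)) ^ ((1:ℂ) - s - 1) : ℂ)
        = ((x ^ (s-1) * (1-x) ^ (-s) : ℝ) : ℂ) := by
  intro x hx
  have hx0 : (0:ℝ) ≤ x := hx.1.le
  have hx1 : (0:ℝ) ≤ 1 - x := by linarith [hx.2]
  have e1 : ((s:ℂ) - 1) = ((s - 1 : ℝ) : ℂ) := by push_cast; ring
  have e2 : ((1:ℂ) - s - 1) = ((-s : ℝ) : ℂ) := by push_cast; ring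
  rw [e1, e2, ← Complex.ofReal_cpow hx0, show (1 - (x:ℂ)) = ((1 - x : ℝ) : ℂ) by push_cast; ring,
    ← Complex.ofReal_cpow hx1, ← Complex.ofReal_mul]

lemma beta_integrable (s : ℝ) (h0 : 0 < s) (h1 : s < 1) :
    IntegrableOn (fun t : ℝ => t ^ (s-1) * (1-t) ^ (-s)) (Ioo (0:ℝ) 1) := by
  have hs : 0 < (s:ℂ).re := by simpa using h0
  have ht : 0 < (1 - (s:ℂ)).re := by simp [Complex.sub_re]; linarith
  have hc := (Complex.betaIntegral_convergent hs ht).1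
  have hre : IntegrableOn
      (fun x : ℝ => ((x:ℂ) ^ ((s:ℂ) - 1) * (1 - (x:ℂ)) ^ ((1:ℂ) - s - 1)).re)
      (Ioc (0:ℝ) 1) := hc.re
  refine (hre.mono_set Ioo_subset_Ioc_self).congr ?_
  filter_upwards [ae_restrict_mem measurableSet_Ioo] with x hx
  rw [beta_ae s h0 h1 x hx, Complex.ofReal_re]

lemma beta_value (s : ℝ) (h0 : 0 < s) (h1 : s < 1) :
    ∫ t in Ioo (0:ℝ) 1, t ^ (s-1) * (1-t) ^ (-s) = π / Real.sin (π * s) := by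
  have key : Complex.betaIntegral s (1 - s)
      = ((∫ t in Ioo (0:ℝ) 1, t ^ (s-1) * (1-t) ^ (-s) : ℝ) : ℂ) := by
    rw [Complex.betaIntegral]
    rw [intervalIntegral.integral_of_le (by norm_num : (0:ℝ) ≤ 1)]
    rw [MeasureTheory.integral_Ioc_eq_integral_Ioo]
    rw [show (∫ t in Ioo (0:ℝ) 1, (t:ℂ) ^ ((s:ℂ)-1) * (1-(t:ℂ)) ^ ((1:ℂ)-(s:ℂ)-1))
        = ∫ t in Ioo (0:ℝ) 1, ((t ^ (s-1) * (1-t) ^ (-s) : ℝ) : ℂ) from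
      setIntegral_congr_fun measurableSet_Ioo (fun x hx => beta_ae s h0 h1 x hx)]
    exact integral_ofReal
  rw [beta_cplx_eq s h0 h1] at key
  exact_mod_cast key.symm


noncomputable def psi (x t : ℝ) : ℝ := Real.sqrt (x^2 + (1-x^2)/t)

lemma psi_sq {x t : ℝ} (hx2 : x^2 < 1) (ht0 : 0 < t) :
    psi x t ^ 2 = x^2 + (1-x^2)/t :=
  Real.sq_sqrt (add_nonneg (sq_nonneg x) (div_nonneg (by linarith) ht0.le))

lemma psi_gt_one {x t : ℝ} (hx2 : x^2 < 1) (ht : t ∈ Set.Ioo (0:ℝ) 1) : 1 < psi x t := by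
  refine (Real.lt_sqrt zero_le_one).2 ?_
  rw [one_pow]
  have h2 : 1 - x^2 < (1-x^2)/t := by
    rw [lt_div_iff₀ ht.1]; nlinarith [ht.2]
  linarith

lemma psi_deriv {x t : ℝ} (hx2 : x^2 < 1) (ht : t ∈ Set.Ioo (0:ℝ) 1) :
    HasDerivWithinAt (psi x) (-(1-x^2)/(2*t^2*psi x t)) (Set.Ioo 0 1) t := by
  have ht0 := ht.1
  have hy : 1 < psi x t := psi_gt_one hx2 ht
  have hne : x^2 + (1-x^2)*t⁻¹ ≠ 0 := by
    have := psi_sq hx2 ht0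
    rw [div_eq_mul_inv] at this
    nlinarith [this, hy]
  have hw : HasDerivAt (fun u : ℝ => x^2 + (1-x^2)*u⁻¹) ((1-x^2) * (-(t^2)⁻¹)) t :=
    ((hasDerivAt_inv (ne_of_gt ht0)).const_mul (1-x^2)).const_add (x^2)
  have h := hw.sqrt hne
  have hpsi : psi x = fun u : ℝ => Real.sqrt (x^2 + (1-x^2)*u⁻¹) := by
    funext u; unfold psi; rw [div_eq_mul_inv]
  rw [← hpsi] at h
  have heq : (1-x^2) * (-(t^2)⁻¹) / (2 * Real.sqrt (x^2 + (1-x^2)*t⁻¹))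
      = -(1-x^2)/(2*t^2*psi x t) := by
    have h1 : Real.sqrt (x^2 + (1-x^2)*t⁻¹) = psi x t := by rw [hpsi]
    rw [h1]
    have hy0 : psi x t ≠ 0 := by linarith
    field_simp
  rw [heq] at h
  exact h.hasDerivWithinAt

lemma psi_inj {x : ℝ} (hx2 : x^2 < 1) : Set.InjOn (psi x) (Set.Ioo 0 1) := by
  intro t1 h1 t2 h2 h
  have e1 := psi_sq hx2 h1.1
  have e2 := psi_sq hx2 h2.1
  have hx' : (0:ℝ) < 1 - x^2 := by linarith
  have heq : (1-x^2)/t1 = (1-x^2)/t2 := by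
    have : x^2 + (1-x^2)/t1 = x^2 + (1-x^2)/t2 := by rw [← e1, ← e2, h]
    linarith
  rw [div_eq_div_iff (ne_of_gt h1.1) (ne_of_gt h2.1)] at heq
  exact (mul_left_cancel₀ (ne_of_gt hx') heq).symm

lemma psi_image {x : ℝ} (hx2 : x^2 < 1) : psi x '' Set.Ioo 0 1 = Set.Ioi 1 := by
  ext y
  constructor
  · rintro ⟨t, ht, rfl⟩; exact psi_gt_one hx2 ht
  · intro hy
    have hy1 : 1 < y := hy
    have hy0 : 0 < y := lt_trans one_pos hy1
    have hyx : x^2 < y^2 := by nlinarith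
    refine ⟨(1-x^2)/(y^2-x^2), ⟨div_pos (by linarith) (by linarith), ?_⟩, ?_⟩
    · rw [div_lt_one (by linarith)]; nlinarith
    · unfold psi
      have h : x^2 + (1-x^2)/((1-x^2)/(y^2-x^2)) = y^2 := by
        have h1 : 1 - x^2 ≠ 0 := by nlinarith
        have h2 : y^2 - x^2 ≠ 0 := by nlinarith
        field_simp
        ring
      rw [h]
      exact Real.sqrt_sq hy0.le

lemma key_sum {s x t : ℝ} (hs0 : 0 < s) (hx1 : -1 < x) (hx2 : x < 1)
    (ht : t ∈ Set.Ioo (0:ℝ) 1) :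
    |(-(1-x^2)/(2*t^2*psi x t))| * (((1-x^2)/((psi x t)^2-1))^s / |x - psi x t|
      + ((1-x^2)/((psi x t)^2-1))^s / |(-x) - psi x t|)
    = t^(s-1) * (1-t)^(-s) := by
  have hx2' : x^2 < 1 := by nlinarith
  have ht0 := ht.1
  have ht1 := ht.2
  set y := psi x t with hy_def
  have hy : 1 < y := psi_gt_one hx2' ht
  have hysq : y^2 = x^2 + (1-x^2)/t := psi_sq hx2' ht0
  have hrel : t * y^2 = t * x^2 + 1 - x^2 := by
    rw [hysq]; field_simp; ring
  have h2 : (1-x^2)/(y^2-1) = t/(1-t) := by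
    rw [div_eq_div_iff (by nlinarith) (by linarith)]
    nlinarith [hrel]
  have h3 : |x - y| = y - x := by
    rw [abs_of_neg (by linarith : x - y < 0)]; ring
  have h4 : |(-x) - y| = y + x := by
    rw [abs_of_neg (by linarith : (-x) - y < 0)]; ring
  have h5 : |(-(1-x^2)/(2*t^2*y))| = (1-x^2)/(2*t^2*y) := by
    rw [neg_div, abs_neg, abs_of_pos]
    apply div_pos (by nlinarith)
    positivity
  rw [h2, h3, h4, h5]
  rw [Real.div_rpow ht0.le (by linarith : (0:ℝ) ≤ 1-t)]
  rw [Real.rpow_sub_one (ne_of_gt ht0), Real.rpow_neg (by linarith : (0:ℝ) ≤ 1-t)]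
  have hts : 0 < t^s := Real.rpow_pos_of_pos ht0 s
  have h1ts : 0 < (1-t)^s := Real.rpow_pos_of_pos (by linarith) s
  have hyx1 : y - x > 0 := by linarith
  have hyx2 : y + x > 0 := by linarith
  field_simp
  linear_combination (-2 * y) * hrel

set_option maxHeartbeats 1000000 in
lemma key_bound {s x c t : ℝ} (hx2 : x^2 < 1) (hc1 : -1 < c) (hc2 : c < 1)
    (ht : t ∈ Set.Ioo (0:ℝ) 1) :
    |(-(1-x^2)/(2*t^2*psi x t))| * (((1-x^2)/((psi x t)^2-1))^s / |c - psi x t|)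
      ≤ (1-c)⁻¹ * (t^(s-1) * (1-t)^(-s)) := by
  have ht0 := ht.1
  have ht1 := ht.2
  set y := psi x t with hy_def
  have hy : 1 < y := psi_gt_one hx2 ht
  have hysq : y^2 = x^2 + (1-x^2)/t := psi_sq hx2 ht0
  have hrel : t * y^2 = t * x^2 + 1 - x^2 := by
    rw [hysq]; field_simp; ring
  have h2 : (1-x^2)/(y^2-1) = t/(1-t) := by
    rw [div_eq_div_iff (by nlinarith) (by linarith)]
    nlinarith [hrel]
  have h3 : |c - y| = y - c := by
    rw [abs_of_neg (by linarith : c - y < 0)]; ring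
  have h5 : |(-(1-x^2)/(2*t^2*y))| = (1-x^2)/(2*t^2*y) := by
    rw [neg_div, abs_neg, abs_of_pos]
    apply div_pos (by nlinarith)
    positivity
  have hA : y*(1+c) ≥ 1+c := by nlinarith
  have hB : 2*(y-c) ≥ y*(1-c) := by nlinarith
  have hC : t*y^2 ≥ 1-x^2 := by nlinarith [hrel]
  have ht2y : (0:ℝ) < t^2*y := by positivity
  have h6 : t^2*y*(y*(1-c)) ≤ t^2*y*(2*(y-c)) := by nlinarith
  have h7 : t*(1-x^2)*(1-c) ≤ t^2*y^2*(1-c) := by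
    nlinarith [mul_nonneg (mul_nonneg ht0.le (show (0:ℝ) ≤ 1-c by linarith))
      (show (0:ℝ) ≤ t*y^2 - (1-x^2) by linarith)]
  have hineq : (1-x^2)/(2*t^2*y*(y-c)) ≤ 1/((1-c)*t) := by
    rw [div_le_div_iff₀ (by nlinarith) (by nlinarith)]
    nlinarith
  calc |(-(1-x^2)/(2*t^2*y))| * (((1-x^2)/(y^2-1))^s / |c - y|)
      = (t^s/(1-t)^s) * ((1-x^2)/(2*t^2*y*(y-c))) := by
        rw [h2, h3, h5, Real.div_rpow ht0.le (by linarith : (0:ℝ) ≤ 1-t)]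
        have hy0 : y ≠ 0 := by positivity
        have hyc : y - c ≠ 0 := by intro h; nlinarith [sub_eq_zero.mp h]
        have h1t : (1-t)^s ≠ 0 := ne_of_gt (Real.rpow_pos_of_pos (by linarith) s)
        field_simp
    _ ≤ (t^s/(1-t)^s) * (1/((1-c)*t)) := by
        exact mul_le_mul_of_nonneg_left hineq
          (le_of_lt (div_pos (Real.rpow_pos_of_pos ht0 s)
            (Real.rpow_pos_of_pos (by linarith) s)))
    _ = (1-c)⁻¹ * (t^(s-1) * (1-t)^(-s)) := by
        rw [Real.rpow_sub_one (ne_of_gt ht0), Real.rpow_neg (by linarith : (0:ℝ) ≤ 1-t),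
          one_div, mul_inv]
        ring

lemma cont_aux {s x c : ℝ} (hx2 : x^2 < 1) (hc1 : -1 < c) (hc2 : c < 1) :
    ContinuousOn (fun t => |(-(1-x^2)/(2*t^2*psi x t))|
      * (((1-x^2)/((psi x t)^2-1))^s / |c - psi x t|)) (Set.Ioo (0:ℝ) 1) := by
  have hψ : ContinuousOn (psi x) (Set.Ioo (0:ℝ) 1) := by
    apply Real.continuous_sqrt.comp_continuousOn
    exact continuousOn_const.add (continuousOn_const.div continuousOn_id
      (fun t ht => ne_of_gt ht.1))
  have hy : ∀ t ∈ Set.Ioo (0:ℝ) 1, 1 < psi x t := fun t ht => psi_gt_one hx2 ht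
  have h1 : ContinuousOn (fun t => -(1-x^2)/(2*t^2*psi x t)) (Set.Ioo (0:ℝ) 1) := by
    apply continuousOn_const.div
    · exact (continuousOn_const.mul (continuousOn_id.pow 2)).mul hψ
    · intro t ht
      have := hy t ht
      have := ht.1
      positivity
  have hbase : ContinuousOn (fun t => (1-x^2)/((psi x t)^2-1)) (Set.Ioo (0:ℝ) 1) := by
    apply continuousOn_const.div ((hψ.pow 2).sub continuousOn_const)
    intro t ht
    have := hy t ht
    show (psi x t)^2 - 1 ≠ 0
    nlinarith
  refine h1.abs.mul ((hbase.rpow_const ?_).div ((continuousOn_const.sub hψ).abs) ?_)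
  · intro t ht
    left
    have := hy t ht
    have h : (0:ℝ) < (1-x^2)/((psi x t)^2-1) := div_pos (by nlinarith) (by nlinarith)
    exact ne_of_gt h
  · intro t ht
    have := hy t ht
    rw [abs_ne_zero]
    intro h
    nlinarith [sub_eq_zero.mp h]

lemma int_side {s x c : ℝ} (hs0 : 0 < s) (hs1 : s < 1) (hx2 : x^2 < 1)
    (hc1 : -1 < c) (hc2 : c < 1) :
    IntegrableOn (fun y => ((1-x^2)/(y^2-1))^s / |c - y|) (Set.Ioi (1:ℝ)) := by
  rw [← psi_image hx2,
    integrableOn_image_iff_integrableOn_abs_deriv_smul measurableSet_Ioo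
      (fun t ht => psi_deriv hx2 ht) (psi_inj hx2)]
  simp_rw [smul_eq_mul]
  have hbeta : IntegrableOn (fun t => (1-c)⁻¹ * (t^(s-1)*(1-t)^(-s))) (Set.Ioo (0:ℝ) 1) :=
    (beta_integrable s hs0 hs1).const_mul _
  refine Integrable.mono' hbeta
    ((cont_aux hx2 hc1 hc2).aestronglyMeasurable measurableSet_Ioo) ?_
  filter_upwards [ae_restrict_mem measurableSet_Ioo] with t ht
  have hy : 1 < psi x t := psi_gt_one hx2 ht
  have hb : (0:ℝ) ≤ (1-x^2)/((psi x t)^2-1) :=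
    le_of_lt (div_pos (by nlinarith) (by nlinarith))
  rw [Real.norm_eq_abs, abs_of_nonneg
    (mul_nonneg (abs_nonneg _) (div_nonneg (Real.rpow_nonneg hb s) (abs_nonneg _)))]
  exact key_bound hx2 hc1 hc2 ht

lemma integrableOn_neg_aux {f : ℝ → ℝ} (h : IntegrableOn (fun y => f (-y)) (Set.Ioi (1:ℝ))) :
    IntegrableOn f (Set.Iio (-1:ℝ)) := by
  have A : MeasurableEmbedding (fun x : ℝ => -x) :=
    (Homeomorph.neg ℝ).isClosedEmbedding.measurableEmbedding
  have hpre : (fun x : ℝ => -x) ⁻¹' (Set.Iio (-1:ℝ)) = Set.Ioi 1 := by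
    ext z
    simp only [Set.mem_preimage, Set.mem_Iio, Set.mem_Ioi]
    constructor <;> intro h1 <;> linarith
  have hmap : volume.restrict (Set.Iio (-1:ℝ))
      = Measure.map (fun x : ℝ => -x) (volume.restrict (Set.Ioi (1:ℝ))) := by
    rw [← hpre, ← Measure.restrict_map A.measurable measurableSet_Iio,
      Measure.map_neg_eq_self]
  rw [IntegrableOn, hmap, A.integrable_map_iff]
  exact h

lemma int_value {s x : ℝ} (hs0 : 0 < s) (hs1 : s < 1) (hx1 : -1 < x) (hx2 : x < 1) :
    ∫ y in Set.Ioi (1:ℝ),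
      (((1-x^2)/(y^2-1))^s / |x - y| + ((1-x^2)/(y^2-1))^s / |(-x) - y|)
      = π / Real.sin (π * s) := by
  have hx2' : x^2 < 1 := by nlinarith
  rw [← psi_image hx2',
    integral_image_eq_integral_abs_deriv_smul measurableSet_Ioo
      (fun t ht => psi_deriv hx2' ht) (psi_inj hx2'),
    ← beta_value s hs0 hs1]
  refine setIntegral_congr_fun measurableSet_Ioo (fun t ht => ?_)
  rw [smul_eq_mul]
  exact key_sum hs0 hx1 hx2 ht

theorem stmt_16 (s : ℝ) (hs : s ∈ Set.Ioo (0:ℝ) (1/2)) (x : ℝ)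
    (hx : x ∈ Set.Ioo (-1:ℝ) 1) :
    ∫ y in {y : ℝ | 1 < |y|},
        (Real.sin (π * s) / π) * ((1 - x^2) / (y^2 - 1)) ^ s / |x - y| = 1 := by
  obtain ⟨hs0, hs12⟩ := hs
  obtain ⟨hx1, hx2⟩ := hx
  have hs1 : s < 1 := by linarith
  have hx2' : x^2 < 1 := by nlinarith
  have hsin : 0 < Real.sin (π * s) := by
    apply Real.sin_pos_of_pos_of_lt_pi
    · positivity
    · nlinarith [Real.pi_pos]
  have hSet : {y : ℝ | 1 < |y|} = Set.Iio (-1) ∪ Set.Ioi 1 := by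
    ext y
    simp only [Set.mem_setOf_eq, Set.mem_union, Set.mem_Iio, Set.mem_Ioi, lt_abs]
    constructor
    · rintro (h | h)
      · exact Or.inr h
      · exact Or.inl (by linarith)
    · rintro (h | h)
      · exact Or.inr (by linarith)
      · exact Or.inl h
  have hIpos := int_side (c := x) hs0 hs1 hx2' hx1 hx2
  have hIneg := int_side (c := -x) hs0 hs1 hx2' (by linarith) (by linarith)
  have hGneg : ∀ y : ℝ, ((1-x^2)/((-y)^2-1))^s / |x - (-y)|
      = ((1-x^2)/(y^2-1))^s / |(-x) - y| := by
    intro y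
    rw [sub_neg_eq_add, show (-x) - y = -(x+y) by ring, abs_neg, neg_sq]
  have hIIio : IntegrableOn (fun y => ((1-x^2)/(y^2-1))^s / |x - y|) (Set.Iio (-1:ℝ)) := by
    apply integrableOn_neg_aux
    have heq : (fun y : ℝ => ((1-x^2)/((-y)^2-1))^s / |x - (-y)|)
        = (fun y : ℝ => ((1-x^2)/(y^2-1))^s / |(-x) - y|) := funext hGneg
    rw [heq]
    exact hIneg
  simp_rw [mul_div_assoc]
  rw [integral_const_mul]
  have hIioval : ∫ y in Set.Iio (-1:ℝ), ((1-x^2)/(y^2-1))^s / |x - y|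
      = ∫ y in Set.Ioi (1:ℝ), ((1-x^2)/(y^2-1))^s / |(-x) - y| := by
    rw [← integral_Iic_eq_integral_Iio, ← integral_comp_neg_Ioi]
    refine setIntegral_congr_fun measurableSet_Ioi (fun y _ => ?_)
    exact hGneg y
  have hdisj : Disjoint (Set.Iio (-1:ℝ)) (Set.Ioi (1:ℝ)) := by
    rw [Set.disjoint_left]
    intro a ha hb
    simp only [Set.mem_Iio, Set.mem_Ioi] at ha hb
    linarith
  rw [hSet, setIntegral_union hdisj measurableSet_Ioi hIIio hIpos, hIioval,
    ← integral_add hIneg hIpos]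
  have : ∫ y in Set.Ioi (1:ℝ),
      (((1-x^2)/(y^2-1))^s / |(-x) - y| + ((1-x^2)/(y^2-1))^s / |x - y|)
      = π / Real.sin (π * s) := by
    rw [← int_value hs0 hs1 hx1 hx2]
    refine setIntegral_congr_fun measurableSet_Ioi (fun y _ => ?_)
    ring
  rw [this]
  field_simp
end
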